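/- Let H be a Hopf algebra over a commutative ring k, (δ, σ) a modular pair, and S̃(h) = δ(h₍₁₎) S(h₍₂₎). Then for all h ∈ H: S̃(h₍₁₎)₍₁₎·h₍₂₎ ⊗ S̃(h₍₁₎)₍₂₎·σ = 1 ⊗ S̃(h)·σ in H ⊗ H. (This is the paracyclic relation τ₂ ∘ δ₁ = δ₀ ∘ τ₁ of the Connes–Moscovici construction.) -/

import Mathlib

open TensorProduct Coalgebra HopfAlgebra

variable {k H : Type*} [CommRing k] [Ring H] [HopfAlgebra k H]

/-- The `δ`-twisted antipode `S̃(h) = δ(h₍₁₎) • S(h₍₂₎)`. -/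
noncomputable def twistedAntipode (δ : H →ₐ[k] k) : H →ₗ[k] H :=
  (TensorProduct.lid k H).toLinearMap ∘ₗ
    TensorProduct.map δ.toLinearMap (antipode (R := k)) ∘ₗ Coalgebra.comul

/-- The degree-2 Connes–Moscovici paracocyclic operator
τ₂(g ⊗ h) = S̃(g)₍₁₎·h ⊗ S̃(g)₍₂₎·σ. -/
noncomputable def tau2 (δ : H →ₐ[k] k) (σ : H) : H ⊗[k] H →ₗ[k] H ⊗[k] H :=
  TensorProduct.map (LinearMap.mul' k H) (LinearMap.mulRight k σ) ∘ₗ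
    (TensorProduct.assoc k H H H).symm.toLinearMap ∘ₗ
    LinearMap.lTensor H (TensorProduct.comm k H H).toLinearMap ∘ₗ
    (TensorProduct.assoc k H H H).toLinearMap ∘ₗ
    LinearMap.rTensor H (Coalgebra.comul ∘ₗ twistedAntipode δ)

variable {B : Type*} [Ring B] [Algebra k B]
/-- Convolution product of linear maps `H →ₗ[k] B`. -/
noncomputable def myconv (f g : H →ₗ[k] B) : H →ₗ[k] B :=
  LinearMap.mul' k B ∘ₗ TensorProduct.map f g ∘ₗ Coalgebra.comul

lemma myconv_repr (f g : H →ₗ[k] B) {h : H} (r : Coalgebra.Repr k h (H × H)) :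
    myconv f g h = ∑ i ∈ r.index, f (r.left i) * g (r.right i) := by
  simp [myconv, ← r.eq, map_sum]

lemma myconv_assoc (f g p : H →ₗ[k] B) :
    myconv (myconv f g) p = myconv f (myconv g p) := by
  ext h
  set r := ℛ k h
  set a₁ : ∀ i : r.ι, Coalgebra.Repr k (r.left i) (H × H) := fun i => ℛ k (r.left i)
  set a₂ : ∀ i : r.ι, Coalgebra.Repr k (r.right i) (H × H) := fun i => ℛ k (r.right i)
  have key := Coalgebra.sum_tmul_tmul_eq r a₁ a₂
  apply_fun (LinearMap.mul' k B ∘ₗ (LinearMap.mul' k B).lTensor B ∘ₗ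
    TensorProduct.map f (TensorProduct.map g p)) at key
  simp only [map_sum, LinearMap.comp_apply, TensorProduct.map_tmul,
    LinearMap.lTensor_tmul, LinearMap.mul'_apply] at key
  rw [myconv_repr _ _ r, myconv_repr _ _ r]
  have hL : ∀ i ∈ r.index, myconv f g (r.left i) * p (r.right i)
      = ∑ j ∈ (a₁ i).index, f ((a₁ i).left j) * (g ((a₁ i).right j) * p (r.right i)) := by
    intro i _
    rw [myconv_repr _ _ (a₁ i), Finset.sum_mul]
    simp [mul_assoc]
  have hR : ∀ i ∈ r.index, f (r.left i) * myconv g p (r.right i)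
      = ∑ j ∈ (a₂ i).index, f (r.left i) * (g ((a₂ i).left j) * p ((a₂ i).right j)) := by
    intro i _
    rw [myconv_repr _ _ (a₂ i), Finset.mul_sum]
  rw [Finset.sum_congr rfl hL, Finset.sum_congr rfl hR, key]

lemma myconv_one_left (f : H →ₗ[k] B) :
    myconv (Algebra.linearMap k B ∘ₗ Coalgebra.counit) f = f := by
  ext h
  set r := ℛ k h
  have key := Coalgebra.sum_counit_tmul_map_eq (R := k) f h (repr := r)
  apply_fun (TensorProduct.lid k B) at key
  simp only [map_sum, TensorProduct.lid_tmul, one_smul] at key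
  rw [myconv_repr _ _ r]
  simpa [Algebra.smul_def] using key

lemma myconv_one_right (f : H →ₗ[k] B) :
    myconv f (Algebra.linearMap k B ∘ₗ Coalgebra.counit) = f := by
  ext h
  set r := ℛ k h
  have key := Coalgebra.sum_map_tmul_counit_eq (R := k) f h (repr := r)
  apply_fun (TensorProduct.rid k B) at key
  simp only [map_sum, TensorProduct.rid_tmul, one_smul] at key
  rw [myconv_repr _ _ r]
  have : ∀ i ∈ r.index, f (r.left i) * (Algebra.linearMap k B ∘ₗ Coalgebra.counit) (r.right i)
      = Coalgebra.counit (R := k) (r.right i) • f (r.left i) := by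
    intro i _
    simp [Algebra.commutes, Algebra.smul_def]
  rw [Finset.sum_congr rfl this, key]

lemma myconv_algHom {C : Type*} [Ring C] [Algebra k C] (φ : B →ₐ[k] C) (f g : H →ₗ[k] B) :
    myconv (φ.toLinearMap ∘ₗ f) (φ.toLinearMap ∘ₗ g) = φ.toLinearMap ∘ₗ myconv f g := by
  ext h
  set r := ℛ k h
  rw [LinearMap.comp_apply, myconv_repr _ _ r, myconv_repr _ _ r, map_sum]
  simp


lemma twistedAntipode_repr (δ : H →ₐ[k] k) {h : H} (r : Coalgebra.Repr k h (H × H)) :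
    twistedAntipode δ h
      = ∑ i ∈ r.index, δ (r.left i) • antipode (R := k) (r.right i) := by
  simp [twistedAntipode, ← r.eq, map_sum]

lemma sum_counit_smul_left {h : H} (r : Coalgebra.Repr k h (H × H)) :
    ∑ i ∈ r.index, Coalgebra.counit (R := k) (r.right i) • r.left i = h := by
  have key := Coalgebra.sum_tmul_counit_eq r
  apply_fun (TensorProduct.rid k H) at key
  simp only [map_sum, TensorProduct.rid_tmul, one_smul] at key
  exact key

lemma myconv_twisted_id (δ : H →ₐ[k] k) :
    myconv (twistedAntipode δ) (LinearMap.id)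
      = Algebra.linearMap k H ∘ₗ δ.toLinearMap := by
  ext h
  set r := ℛ k h
  set a₁ : ∀ i : r.ι, Coalgebra.Repr k (r.left i) (H × H) := fun i => ℛ k (r.left i)
  set a₂ : ∀ i : r.ι, Coalgebra.Repr k (r.right i) (H × H) := fun i => ℛ k (r.right i)
  have key := Coalgebra.sum_tmul_tmul_eq r a₁ a₂
  apply_fun ((TensorProduct.lid k H).toLinearMap ∘ₗ
    TensorProduct.map δ.toLinearMap
      (LinearMap.mul' k H ∘ₗ (antipode (R := k)).rTensor H)) at key
  simp only [map_sum, LinearMap.comp_apply, TensorProduct.map_tmul,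
    LinearMap.rTensor_tmul, LinearMap.mul'_apply, LinearMap.coe_comp,
    LinearEquiv.coe_coe, TensorProduct.lid_tmul, AlgHom.toLinearMap_apply,
    Function.comp_apply] at key
  rw [myconv_repr _ _ r]
  have hL : ∀ i ∈ r.index, twistedAntipode δ (r.left i) * (LinearMap.id : H →ₗ[k] H) (r.right i)
      = ∑ j ∈ (a₁ i).index,
          δ ((a₁ i).left j) • (antipode (R := k) ((a₁ i).right j) * r.right i) := by
    intro i _
    rw [twistedAntipode_repr δ (a₁ i), LinearMap.id_apply, Finset.sum_mul]
    simp [smul_mul_assoc]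
  rw [Finset.sum_congr rfl hL, key]
  have hR : ∀ i ∈ r.index,
      ∑ j ∈ (a₂ i).index,
        δ (r.left i) • (antipode (R := k) ((a₂ i).left j) * (a₂ i).right j)
      = δ (r.left i) • algebraMap k H (Coalgebra.counit (R := k) (r.right i)) := by
    intro i _
    rw [← Finset.smul_sum, HopfAlgebra.sum_antipode_mul_eq_algebraMap_counit (a₂ i)]
  rw [Finset.sum_congr rfl hR]
  have hδ := congrArg δ (sum_counit_smul_left r)
  rw [map_sum] at hδ
  simp only [map_smul, smul_eq_mul] at hδ
  have : ∀ i ∈ r.index,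
      δ (r.left i) • algebraMap k H (Coalgebra.counit (R := k) (r.right i))
      = algebraMap k H (Coalgebra.counit (R := k) (r.right i) * δ (r.left i)) := by
    intro i _
    rw [Algebra.smul_def, ← map_mul, mul_comm]
  rw [Finset.sum_congr rfl this, ← map_sum, hδ]
  simp

lemma myconv_mk_one_mk_one :
    myconv ((TensorProduct.mk k H H).flip 1) (TensorProduct.mk k H H 1)
      = (Coalgebra.comul (R := k) (A := H)) := by
  ext h
  set r := ℛ k h
  rw [myconv_repr _ _ r, ← r.eq]
  simp [Algebra.TensorProduct.tmul_mul_tmul]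

lemma myconv_comul_twisted (δ : H →ₐ[k] k) :
    myconv ((Coalgebra.comul (R := k)) ∘ₗ twistedAntipode δ) (Coalgebra.comul (R := k))
      = Algebra.linearMap k (H ⊗[k] H) ∘ₗ δ.toLinearMap := by
  have h1 : (Coalgebra.comul (R := k) (A := H)) ∘ₗ twistedAntipode δ
      = (Bialgebra.comulAlgHom k H).toLinearMap ∘ₗ twistedAntipode δ := rfl
  have h2 : (Coalgebra.comul (R := k) (A := H))
      = (Bialgebra.comulAlgHom k H).toLinearMap ∘ₗ (LinearMap.id : H →ₗ[k] H) := by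
    ext; rfl
  rw [h1, h2, myconv_algHom, myconv_twisted_id]
  ext x
  simp

lemma myconv_mk_antipode :
    myconv (TensorProduct.mk k H H 1) (TensorProduct.mk k H H 1 ∘ₗ antipode (R := k))
      = Algebra.linearMap k (H ⊗[k] H) ∘ₗ Coalgebra.counit := by
  ext h
  set r := ℛ k h
  rw [myconv_repr _ _ r]
  have : ∀ i ∈ r.index,
      TensorProduct.mk k H H 1 (r.left i)
        * (TensorProduct.mk k H H 1 ∘ₗ antipode (R := k)) (r.right i)
      = (1 : H) ⊗ₜ[k] (r.left i * antipode (R := k) (r.right i)) := by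
    intro i _
    simp [Algebra.TensorProduct.tmul_mul_tmul]
  rw [Finset.sum_congr rfl this, ← TensorProduct.tmul_sum,
    HopfAlgebra.sum_mul_antipode_eq_algebraMap_counit r]
  simp [Algebra.TensorProduct.algebraMap_apply, Algebra.algebraMap_eq_smul_one,
    TensorProduct.smul_tmul, Algebra.TensorProduct.one_def]

lemma myconv_unit_delta_antipode (δ : H →ₐ[k] k) :
    myconv (Algebra.linearMap k (H ⊗[k] H) ∘ₗ δ.toLinearMap)
        (TensorProduct.mk k H H 1 ∘ₗ antipode (R := k))
      = TensorProduct.mk k H H 1 ∘ₗ twistedAntipode δ := by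
  ext h
  set r := ℛ k h
  rw [myconv_repr _ _ r, LinearMap.comp_apply, twistedAntipode_repr δ r, map_sum]
  refine Finset.sum_congr rfl fun i _ => ?_
  simp only [LinearMap.comp_apply, AlgHom.toLinearMap_apply, Algebra.linearMap_apply,
    Algebra.TensorProduct.algebraMap_apply, TensorProduct.mk_apply,
    Algebra.TensorProduct.tmul_mul_tmul, one_mul, mul_one,
    Algebra.algebraMap_eq_smul_one, TensorProduct.smul_tmul, TensorProduct.tmul_smul,
    smul_mul_assoc, one_mul]

lemma core_lemma (δ : H →ₐ[k] k) :
    myconv ((Coalgebra.comul (R := k)) ∘ₗ twistedAntipode δ)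
        ((TensorProduct.mk k H H).flip 1)
      = TensorProduct.mk k H H 1 ∘ₗ twistedAntipode δ := by
  set F := myconv ((Coalgebra.comul (R := k)) ∘ₗ twistedAntipode δ)
    ((TensorProduct.mk k H H).flip 1) with hF
  have hF2 : myconv F (TensorProduct.mk k H H 1)
      = Algebra.linearMap k (H ⊗[k] H) ∘ₗ δ.toLinearMap := by
    rw [hF, myconv_assoc, myconv_mk_one_mk_one, myconv_comul_twisted]
  calc F = myconv F (Algebra.linearMap k (H ⊗[k] H) ∘ₗ Coalgebra.counit) :=
        (myconv_one_right F).symm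
    _ = myconv F (myconv (TensorProduct.mk k H H 1)
          (TensorProduct.mk k H H 1 ∘ₗ antipode (R := k))) := by
        rw [myconv_mk_antipode]
    _ = myconv (myconv F (TensorProduct.mk k H H 1))
          (TensorProduct.mk k H H 1 ∘ₗ antipode (R := k)) := (myconv_assoc _ _ _).symm
    _ = myconv (Algebra.linearMap k (H ⊗[k] H) ∘ₗ δ.toLinearMap)
          (TensorProduct.mk k H H 1 ∘ₗ antipode (R := k)) := by rw [hF2]
    _ = TensorProduct.mk k H H 1 ∘ₗ twistedAntipode δ :=
        myconv_unit_delta_antipode δ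


lemma tau2_tmul (δ : H →ₐ[k] k) (σ : H) (a b : H)
    (s : Coalgebra.Repr k (twistedAntipode δ a) (H × H)) :
    tau2 δ σ (a ⊗ₜ[k] b)
      = ∑ j ∈ s.index, (s.left j * b) ⊗ₜ[k] (s.right j * σ) := by
  simp only [tau2, LinearMap.comp_apply, LinearMap.rTensor_tmul]
  rw [← s.eq]
  simp [TensorProduct.sum_tmul, map_sum]

/-- τ₂ ∘ δ₁ = δ₀ ∘ τ₁, i.e. τ₂(Δ(h)) = 1 ⊗ S̃(h)·σ. -/
theorem tau2_coface1 (δ : H →ₐ[k] k) (σ : H)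
    (hΔ : Coalgebra.comul (R := k) σ = σ ⊗ₜ[k] σ)
    (hε : Coalgebra.counit (R := k) σ = (1 : k))
    (hδσ : δ σ = 1) (h : H) :
    tau2 δ σ (Coalgebra.comul (R := k) h) =
      (1 : H) ⊗ₜ[k] (twistedAntipode δ h * σ) := by
  set r := ℛ k h
  set s : ∀ i : r.ι, Coalgebra.Repr k (twistedAntipode δ (r.left i)) (H × H) :=
    fun i => ℛ k (twistedAntipode δ (r.left i))
  have hL : tau2 δ σ (Coalgebra.comul (R := k) h)
      = ∑ i ∈ r.index, ∑ j ∈ (s i).index,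
          ((s i).left j * r.right i) ⊗ₜ[k] ((s i).right j * σ) := by
    rw [← r.eq, map_sum]
    exact Finset.sum_congr rfl fun i _ => tau2_tmul δ σ _ _ (s i)
  have hcore := congrArg (fun F : H →ₗ[k] H ⊗[k] H =>
    LinearMap.lTensor H (LinearMap.mulRight k σ) (F h)) (core_lemma δ)
  simp only [LinearMap.comp_apply, TensorProduct.mk_apply, LinearMap.lTensor_tmul,
    LinearMap.mulRight_apply] at hcore
  rw [hL, ← hcore, myconv_repr _ _ r, map_sum]
  refine Finset.sum_congr rfl fun i _ => ?_
  rw [LinearMap.comp_apply, ← (s i).eq, Finset.sum_mul, map_sum]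
  refine Finset.sum_congr rfl fun j _ => ?_
  simp [Algebra.TensorProduct.tmul_mul_tmul]
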